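/- (Second prox theorem for weakly convex functions.) If u is a proximal point of φ at z with parameter γ, then the vector γ^{-1}(z − u) is a ρ-weak subgradient of φ at u: for every y ∈ ℝ^p, φ(y) ≥ φ(u) + ⟪γ^{-1}(z − u), y − u⟫ − (ρ/2)‖y − u‖². -/

import Mathlib

open scoped RealInnerProductSpace

set_option maxHeartbeats 1000000 in
/-- Second prox theorem for weakly convex functions: if `u` is a proximal point of `φ` at `z`
with parameter `γ`, then `γ⁻¹(z − u)` is a `ρ`-weak subgradient of `φ` at `u`. -/
theorem second_prox_theorem_weakly_convex
    {p : ℕ} (hp : 1 ≤ p) (ρ γ : ℝ) (hρ : 0 ≤ ρ) (hγ : 0 < γ) (hγρ : γ * ρ < 1)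
    (φ : EuclideanSpace ℝ (Fin p) → ℝ)
    (hφlsc : LowerSemicontinuous φ)
    (hφwc : ConvexOn ℝ Set.univ (fun y => φ y + ρ / 2 * ‖y‖ ^ 2))
    (z u : EuclideanSpace ℝ (Fin p))
    (hu : IsMinOn (fun y => φ y + ‖y - z‖ ^ 2 / (2 * γ)) Set.univ u) :
    ∀ y : EuclideanSpace ℝ (Fin p),
      φ y ≥ φ u + ⟪γ⁻¹ • (z - u), y - u⟫ - ρ / 2 * ‖y - u‖ ^ 2 := by
  intro y
  set d : EuclideanSpace ℝ (Fin p) := y - u with hd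
  set D : ℝ := ‖d‖ ^ 2 with hD
  have hDnn : 0 ≤ D := sq_nonneg _
  set g : ℝ := (2 * γ)⁻¹ with hgdef
  have hgpos : 0 < g := by positivity
  have hγg : γ⁻¹ = 2 * g := by rw [hgdef]; field_simp
  set I : ℝ := ⟪u - z, d⟫ with hIdef
  have hinner : ⟪γ⁻¹ • (z - u), d⟫ = -(2 * g * I) := by
    rw [real_inner_smul_left, hγg, hIdef,
      show z - u = -(u - z) by abel, inner_neg_left]
    ring
  -- norm expansion lemma
  have hts : ∀ (s : ℝ) (v : EuclideanSpace ℝ (Fin p)),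
      ‖v + s • d‖ ^ 2 = ‖v‖ ^ 2 + 2 * s * ⟪v, d⟫ + s ^ 2 * D := by
    intro s v
    rw [hD, @norm_add_sq_real, real_inner_smul_right, norm_smul, Real.norm_eq_abs,
      mul_pow, sq_abs]
    ring
  -- the per-t inequality
  have key : ∀ t : ℝ, 0 < t → t ≤ 1 →
      φ u + ⟪γ⁻¹ • (z - u), d⟫ - ρ / 2 * D ≤ φ y + t * ((g - ρ / 2) * D) := by
    intro t ht ht1
    set yt : EuclideanSpace ℝ (Fin p) := u + t • d with hyt
    have hyt' : yt = (1 - t) • u + t • y := by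
      rw [hyt, hd]; module
    have h1 : φ yt + ρ / 2 * ‖yt‖ ^ 2 ≤
        (1 - t) * (φ u + ρ / 2 * ‖u‖ ^ 2) + t * (φ y + ρ / 2 * ‖y‖ ^ 2) := by
      have := hφwc.2 (Set.mem_univ u) (Set.mem_univ y)
        (by linarith : (0:ℝ) ≤ 1 - t) ht.le (by ring)
      rw [hyt']
      simpa using this
    have h2 : φ u + ‖u - z‖ ^ 2 / (2 * γ) ≤ φ yt + ‖yt - z‖ ^ 2 / (2 * γ) :=
      hu (Set.mem_univ yt)
    have h2m : φ u + ‖u - z‖ ^ 2 * g ≤ φ yt + ‖yt - z‖ ^ 2 * g := by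
      simpa [div_eq_mul_inv, hgdef] using h2
    have h3 : ‖yt‖ ^ 2 = ‖u‖ ^ 2 + 2 * t * ⟪u, d⟫ + t ^ 2 * D := hts t u
    have h3' : ‖y‖ ^ 2 = ‖u‖ ^ 2 + 2 * ⟪u, d⟫ + D := by
      have hy : y = u + (1:ℝ) • d := by rw [hd]; module
      calc ‖y‖ ^ 2 = ‖u + (1:ℝ) • d‖ ^ 2 := by rw [← hy]
        _ = ‖u‖ ^ 2 + 2 * 1 * ⟪u, d⟫ + 1 ^ 2 * D := hts 1 u
        _ = ‖u‖ ^ 2 + 2 * ⟪u, d⟫ + D := by ring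
    have h4 : ‖yt - z‖ ^ 2 = ‖u - z‖ ^ 2 + 2 * t * I + t ^ 2 * D := by
      have h : yt - z = (u - z) + t • d := by rw [hyt]; abel
      rw [h, hts t (u - z), hIdef]
    rw [hinner]
    -- combine: convexity bound on φ yt
    have e1 : φ yt ≤ (1 - t) * φ u + t * φ y + ρ / 2 * (t * (1 - t) * D) := by
      rw [h3, h3'] at h1
      nlinarith [h1]
    -- minimality bound
    have e2 : φ u ≤ φ yt + (2 * t * I + t ^ 2 * D) * g := by
      rw [h4] at h2m
      nlinarith [h2m]
    clear h1 h2 h2m h3 h3' h4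
    have hcomb : t * φ u ≤ t * φ y + ρ / 2 * (t * (1 - t) * D)
        + (2 * t * I + t ^ 2 * D) * g := by nlinarith [e1, e2]
    -- divide by t
    rw [← mul_le_mul_iff_of_pos_left ht]
    nlinarith [hcomb]
  -- take the limit t → 0⁺
  have hc : 0 ≤ (g - ρ / 2) * D := by
    have : ρ / 2 ≤ g := by
      rw [hgdef, inv_eq_one_div, le_div_iff₀ (by positivity)]
      nlinarith
    nlinarith
  set c : ℝ := (g - ρ / 2) * D with hcdef
  have hmain : φ u + ⟪γ⁻¹ • (z - u), d⟫ - ρ / 2 * D ≤ φ y := by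
    refine le_of_forall_pos_le_add ?_
    intro ε hε
    set t : ℝ := min 1 (ε / (c + 1)) with htdef
    have ht0 : 0 < t := lt_min one_pos (by positivity)
    have ht1 : t ≤ 1 := min_le_left _ _
    have htc : t * c ≤ ε := by
      have h1 : t ≤ ε / (c + 1) := min_le_right _ _
      have h1' : t * c ≤ (ε / (c + 1)) * c := mul_le_mul_of_nonneg_right h1 hc
      have h2 : (ε / (c + 1)) * c ≤ ε := by
        rw [div_mul_eq_mul_div, div_le_iff₀ (by linarith)]
        nlinarith
      linarith
    have := key t ht0 ht1
    linarith
  linarith
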